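/- Let z₀ > 0. Assume ∫_{(-∞,-1]} |y| e^{z₀|y|} ν(dy) < ∞ and ∫_{[1,∞)} |y| ν(dy) < ∞, so that J′(z) is finite for every z ∈ [0, z₀]. Then J′ is Lipschitz continuous on the interval [0, z₀] if and only if ∫_{(-∞,-1]} y² e^{z₀|y|} ν(dy) < ∞ and ∫_{[1,∞)} y² ν(dy) < ∞. -/

import Mathlib

open MeasureTheory

section JprimeAux

open Real Filter Set Topology

lemma exp_sub_exp_abs (a b : ℝ) :
    |Real.exp a - Real.exp b| ≤ |a - b| * (Real.exp a + Real.exp b) := by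
  wlog h : b ≤ a generalizing a b
  · rw [abs_sub_comm, abs_sub_comm a b, add_comm]
    exact this _ _ (le_of_not_ge h)
  rw [abs_of_nonneg (sub_nonneg.2 (Real.exp_le_exp.2 h)), abs_of_nonneg (sub_nonneg.2 h)]
  have h3 : Real.exp (a - b) * Real.exp (-(a - b)) = 1 := by
    rw [← Real.exp_add]; simp
  have h2 : Real.exp (a - b) - 1 ≤ (a - b) * Real.exp (a - b) := by
    nlinarith [Real.add_one_le_exp (-(a - b)), Real.exp_pos (a - b), sub_nonneg.2 h]
  have h1 : Real.exp a - Real.exp b = Real.exp b * (Real.exp (a - b) - 1) := by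
    rw [mul_sub, mul_one, ← Real.exp_add]; ring_nf
  have h4 : Real.exp b * Real.exp (a - b) = Real.exp a := by
    rw [← Real.exp_add]; ring_nf
  nlinarith [Real.exp_pos b, Real.exp_pos a, sub_nonneg.2 h]

noncomputable def fz (z y : ℝ) : ℝ :=
  y * ((Set.Ioo (-1 : ℝ) 1).indicator 1 y - Real.exp (-(z * y)))

lemma fz_meas (z : ℝ) : Measurable (fz z) := by
  apply measurable_id.mul
  exact ((measurable_one.indicator measurableSet_Ioo).sub
    (Real.measurable_exp.comp (measurable_id.const_mul z).neg))

lemma min_sq_integrable (ν : Measure ℝ)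
    (hν : ∫⁻ y, ENNReal.ofReal (min (y ^ 2) 1) ∂ν < ⊤) :
    Integrable (fun y => min (y ^ 2) 1) ν := by
  have hm : Measurable fun y : ℝ => min (y ^ 2) 1 := by fun_prop
  refine ⟨hm.aestronglyMeasurable, ?_⟩
  rw [hasFiniteIntegral_iff_ofReal (ae_of_all _ fun y => le_min (sq_nonneg y) one_pos.le)]
  exact hν

lemma univ_split : (univ : Set ℝ) = Iic (-1) ∪ (Ici 1 ∪ Ioo (-1) 1) := by
  ext y; simp only [mem_univ, mem_union, mem_Iic, mem_Ici, mem_Ioo, true_iff]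
  by_cases h : y ≤ -1
  · exact Or.inl h
  · push_neg at h
    by_cases h2 : 1 ≤ y
    · exact Or.inr (Or.inl h2)
    · exact Or.inr (Or.inr ⟨h, lt_of_not_ge h2⟩)

lemma fz_integrable (ν : Measure ℝ) (z₀ : ℝ)
    (hν : ∫⁻ y, ENNReal.ofReal (min (y ^ 2) 1) ∂ν < ⊤)
    (h1 : IntegrableOn (fun y => |y| * Real.exp (z₀ * |y|)) (Set.Iic (-1)) ν)
    (h2 : IntegrableOn (fun y => |y|) (Set.Ici 1) ν)
    (z : ℝ) (hz0 : 0 ≤ z) (hz : z ≤ z₀) : Integrable (fz z) ν := by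
  rw [← integrableOn_univ, univ_split]
  have hmeas : AEStronglyMeasurable (fz z) ν := (fz_meas z).aestronglyMeasurable
  refine IntegrableOn.union ?_ (IntegrableOn.union ?_ ?_)
  · refine Integrable.mono' h1 hmeas.restrict ?_
    rw [ae_restrict_iff' measurableSet_Iic]
    refine ae_of_all _ fun y hy => ?_
    simp only [mem_Iic] at hy
    have hy0 : y ≤ 0 := hy.trans (by norm_num)
    have hind : (Set.Ioo (-1 : ℝ) 1).indicator (1 : ℝ → ℝ) y = 0 := by
      apply Set.indicator_of_notMem
      simp only [mem_Ioo, not_and_or, not_lt]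
      exact Or.inl hy
    simp only [fz, hind, zero_sub, Real.norm_eq_abs, abs_mul, abs_neg, Real.abs_exp]
    have habs : |y| = -y := abs_of_nonpos hy0
    have : Real.exp (-(z * y)) ≤ Real.exp (z₀ * |y|) := by
      rw [Real.exp_le_exp, habs]
      have : -(z * y) = z * (-y) := by ring
      rw [this]
      exact mul_le_mul_of_nonneg_right hz (by linarith)
    exact mul_le_mul_of_nonneg_left this (abs_nonneg y)
  · refine Integrable.mono' h2 hmeas.restrict ?_
    rw [ae_restrict_iff' measurableSet_Ici]
    refine ae_of_all _ fun y hy => ?_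
    simp only [mem_Ici] at hy
    have hind : (Set.Ioo (-1 : ℝ) 1).indicator (1 : ℝ → ℝ) y = 0 := by
      apply Set.indicator_of_notMem
      simp only [mem_Ioo, not_and_or, not_lt]
      exact Or.inr hy
    simp only [fz, hind, zero_sub, Real.norm_eq_abs, abs_mul, abs_neg, Real.abs_exp]
    have : Real.exp (-(z * y)) ≤ 1 := by
      rw [Real.exp_le_one_iff]
      have : 0 ≤ z * y := mul_nonneg hz0 (by linarith)
      linarith
    calc |y| * Real.exp (-(z * y)) ≤ |y| * 1 := mul_le_mul_of_nonneg_left this (abs_nonneg y)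
      _ = |y| := mul_one _
  · have hint : Integrable (fun y => z₀ * (1 + Real.exp z₀) * min (y ^ 2) 1) ν :=
      (min_sq_integrable ν hν).const_mul _
    refine Integrable.mono' hint.restrict hmeas.restrict ?_
    rw [ae_restrict_iff' measurableSet_Ioo]
    refine ae_of_all _ fun y hy => ?_
    simp only [mem_Ioo] at hy
    obtain ⟨hy1, hy2⟩ := hy
    have habs : |y| ≤ 1 := abs_le.2 ⟨hy1.le, hy2.le⟩
    have hind : (Set.Ioo (-1 : ℝ) 1).indicator (1 : ℝ → ℝ) y = 1 := by
      rw [Set.indicator_of_mem (mem_Ioo.2 ⟨hy1, hy2⟩)]; rfl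
    simp only [fz, hind, Real.norm_eq_abs, abs_mul]
    have hb : |1 - Real.exp (-(z * y))| ≤ z * |y| * (1 + Real.exp (-(z * y))) := by
      have := exp_sub_exp_abs 0 (-(z * y))
      simpa [abs_mul, abs_of_nonneg hz0] using this
    have hez : Real.exp (-(z * y)) ≤ Real.exp z₀ := by
      rw [Real.exp_le_exp]
      have : |z * y| ≤ z₀ := by
        rw [abs_mul, abs_of_nonneg hz0]
        calc z * |y| ≤ z₀ * 1 := mul_le_mul hz habs (abs_nonneg y) (le_trans hz0 hz)
          _ = z₀ := mul_one _
      linarith [neg_abs_le (z * y), abs_le.1 this]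
    have hmin : min (y ^ 2) 1 = y ^ 2 := min_eq_left (by nlinarith)
    rw [hmin]
    calc |y| * |1 - Real.exp (-(z * y))| ≤ |y| * (z * |y| * (1 + Real.exp (-(z * y)))) :=
          mul_le_mul_of_nonneg_left hb (abs_nonneg y)
      _ = z * (1 + Real.exp (-(z * y))) * y ^ 2 := by
          rw [← sq_abs]; ring
      _ ≤ z₀ * (1 + Real.exp z₀) * y ^ 2 := by
          have hcf : z * (1 + Real.exp (-(z * y))) ≤ z₀ * (1 + Real.exp z₀) :=
            mul_le_mul hz (by linarith) (by positivity) (le_trans hz0 hz)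
          exact mul_le_mul_of_nonneg_right hcf (sq_nonneg y)

lemma exp_diff_nonneg (w z y : ℝ) (h : w ≤ z) :
    0 ≤ y * (Real.exp (-(w * y)) - Real.exp (-(z * y))) := by
  rcases le_or_gt 0 y with hy | hy
  · apply mul_nonneg hy
    rw [sub_nonneg, Real.exp_le_exp]
    nlinarith
  · have hs : Real.exp (-(w * y)) - Real.exp (-(z * y)) ≤ 0 := by
      rw [sub_nonpos, Real.exp_le_exp]
      nlinarith
    nlinarith [mul_nonneg (neg_nonneg.2 hy.le) (neg_nonneg.2 hs)]

lemma tendsto_slope_exp (y c : ℝ) {u : ℕ → ℝ} (hu : Tendsto u atTop (𝓝 c))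
    (hne : ∀ n, u n ≠ c) :
    Tendsto (fun n => (Real.exp (-(u n * y)) - Real.exp (-(c * y))) / (u n - c)) atTop
      (𝓝 (-y * Real.exp (-(c * y)))) := by
  have h1 : HasDerivAt (fun z : ℝ => -(z * y)) (-y) c := (hasDerivAt_mul_const y).neg
  have hd : HasDerivAt (fun z => Real.exp (-(z * y))) (-y * Real.exp (-(c * y))) c := by
    simpa [mul_comm] using h1.exp
  rw [hasDerivAt_iff_tendsto_slope] at hd
  have hcomp : Tendsto u atTop (𝓝[≠] c) := by
    refine tendsto_nhdsWithin_iff.2 ⟨hu, Eventually.of_forall fun n => ?_⟩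
    simpa using hne n
  have := hd.comp hcomp
  refine this.congr fun n => ?_
  rw [Function.comp_apply, slope_def_field]

lemma fatou_aux (ν : Measure ℝ) (C : ℝ) (ψ : ℕ → ℝ → ℝ) (L : ℝ → ℝ)
    (hmeas : ∀ n, Measurable (ψ n)) (hnn : ∀ n y, 0 ≤ ψ n y)
    (hint : ∀ n, Integrable (ψ n) ν) (hI : ∀ n, ∫ y, ψ n y ∂ν ≤ C)
    (hlim : ∀ y, Tendsto (fun n => ψ n y) atTop (𝓝 (L y)))
    (hLmeas : Measurable L) : Integrable L ν := by
  have hLnn : ∀ y, 0 ≤ L y := fun y =>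
    le_of_tendsto_of_tendsto' tendsto_const_nhds (hlim y) fun n => hnn n y
  have key : ∫⁻ y, ENNReal.ofReal (L y) ∂ν ≤ ENNReal.ofReal C := by
    have heq : ∀ y, ENNReal.ofReal (L y) = liminf (fun n => ENNReal.ofReal (ψ n y)) atTop :=
      fun y => ((ENNReal.continuous_ofReal.tendsto _).comp (hlim y)).liminf_eq.symm
    calc ∫⁻ y, ENNReal.ofReal (L y) ∂ν
        = ∫⁻ y, liminf (fun n => ENNReal.ofReal (ψ n y)) atTop ∂ν := lintegral_congr heq
      _ ≤ liminf (fun n => ∫⁻ y, ENNReal.ofReal (ψ n y) ∂ν) atTop :=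
          lintegral_liminf_le fun n => (hmeas n).ennreal_ofReal
      _ ≤ liminf (fun _ : ℕ => ENNReal.ofReal C) atTop := by
          refine liminf_le_liminf (Eventually.of_forall fun n => ?_)
          rw [← ofReal_integral_eq_lintegral_ofReal (hint n) (ae_of_all _ (hnn n))]
          exact ENNReal.ofReal_le_ofReal (hI n)
      _ = ENNReal.ofReal C := liminf_const _
  refine ⟨hLmeas.aestronglyMeasurable, ?_⟩
  rw [hasFiniteIntegral_iff_ofReal (ae_of_all _ hLnn)]
  exact lt_of_le_of_lt key ENNReal.ofReal_lt_top

end JprimeAux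

/-- The derivative of the Laplace exponent of the Lévy process with
characteristics `(a, q, ν)`:
`J′(z) = −a + qz + ∫ y (𝟙_{(−1,1)}(y) − e^{−zy}) ν(dy)`. -/
noncomputable def Jprime (ν : Measure ℝ) (a q : ℝ) (z : ℝ) : ℝ :=
  -a + q * z + ∫ y, y * ((Set.Ioo (-1 : ℝ) 1).indicator 1 y - Real.exp (-(z * y))) ∂ν

section JprimeAux2

open Real Filter Set Topology

lemma Jprime_eq (ν : Measure ℝ) (a q z : ℝ) :
    Jprime ν a q z = -a + q * z + ∫ y, fz z y ∂ν := rfl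

noncomputable def Hd (z₀ y : ℝ) : ℝ :=
  2 * ((Set.Iic (-1 : ℝ)).indicator (fun y => y ^ 2 * Real.exp (z₀ * |y|)) y +
    (Set.Ici (1 : ℝ)).indicator (fun y => y ^ 2) y + Real.exp z₀ * min (y ^ 2) 1)

lemma fz_diff_eq (z w y : ℝ) :
    fz z y - fz w y = y * (Real.exp (-(w * y)) - Real.exp (-(z * y))) := by
  simp only [fz]; ring

lemma fz_diff_bound (z₀ z w y : ℝ) (hz0 : 0 ≤ z) (hz : z ≤ z₀) (hw0 : 0 ≤ w) (hw : w ≤ z₀) :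
    |fz z y - fz w y| ≤ |z - w| * Hd z₀ y := by
  set S := Real.exp (-(w * y)) + Real.exp (-(z * y)) with hS
  have key : |fz z y - fz w y| ≤ |z - w| * (y ^ 2 * S) := by
    rw [fz_diff_eq, abs_mul]
    have h := exp_sub_exp_abs (-(w * y)) (-(z * y))
    have habs : |(-(w * y)) - (-(z * y))| = |z - w| * |y| := by
      rw [show (-(w * y)) - (-(z * y)) = (z - w) * y by ring, abs_mul]
    rw [habs] at h
    calc |y| * |Real.exp (-(w * y)) - Real.exp (-(z * y))|
        ≤ |y| * (|z - w| * |y| * S) := mul_le_mul_of_nonneg_left h (abs_nonneg y)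
      _ = |z - w| * (y ^ 2 * S) := by rw [← sq_abs]; ring
  refine key.trans (mul_le_mul_of_nonneg_left ?_ (abs_nonneg _))
  have hminnn : (0 : ℝ) ≤ min (y ^ 2) 1 := le_min (sq_nonneg y) one_pos.le
  by_cases hy1 : y ≤ -1
  · have hE : ∀ u, 0 ≤ u → u ≤ z₀ → Real.exp (-(u * y)) ≤ Real.exp (z₀ * |y|) := by
      intro u hu0 hu
      rw [Real.exp_le_exp, abs_of_nonpos (by linarith : y ≤ 0)]
      have : -(u * y) = u * (-y) := by ring
      rw [this]
      exact mul_le_mul_of_nonneg_right hu (by linarith)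
    have hS' : S ≤ 2 * Real.exp (z₀ * |y|) := by
      have := hE w hw0 hw; have := hE z hz0 hz; rw [hS]; linarith
    have hind1 : (Set.Iic (-1 : ℝ)).indicator (fun y => y ^ 2 * Real.exp (z₀ * |y|)) y
        = y ^ 2 * Real.exp (z₀ * |y|) := Set.indicator_of_mem (mem_Iic.2 hy1) _
    have hind2 : (Set.Ici (1 : ℝ)).indicator (fun y : ℝ => y ^ 2) y = 0 :=
      Set.indicator_of_notMem (by simp only [mem_Ici, not_le]; linarith) _
    rw [Hd, hind1, hind2]
    nlinarith [sq_nonneg y, mul_le_mul_of_nonneg_left hS' (sq_nonneg y),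
      mul_nonneg (Real.exp_pos z₀).le hminnn]
  · push_neg at hy1
    by_cases hy2 : 1 ≤ y
    · have hE : ∀ u, 0 ≤ u → Real.exp (-(u * y)) ≤ 1 := by
        intro u hu0
        rw [Real.exp_le_one_iff]
        nlinarith
      have hS' : S ≤ 2 := by
        have := hE w hw0; have := hE z hz0; rw [hS]; linarith
      have hind1 : (Set.Iic (-1 : ℝ)).indicator (fun y => y ^ 2 * Real.exp (z₀ * |y|)) y = 0 :=
        Set.indicator_of_notMem (by simp only [mem_Iic, not_le]; linarith) _
      have hind2 : (Set.Ici (1 : ℝ)).indicator (fun y : ℝ => y ^ 2) y = y ^ 2 :=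
        Set.indicator_of_mem (mem_Ici.2 hy2) _
      rw [Hd, hind1, hind2]
      nlinarith [sq_nonneg y, mul_le_mul_of_nonneg_left hS' (sq_nonneg y),
        mul_nonneg (Real.exp_pos z₀).le hminnn]
    · push_neg at hy2
      have habs : |y| ≤ 1 := abs_le.2 ⟨hy1.le, hy2.le⟩
      have hE : ∀ u, 0 ≤ u → u ≤ z₀ → Real.exp (-(u * y)) ≤ Real.exp z₀ := by
        intro u hu0 hu
        rw [Real.exp_le_exp]
        have : |u * y| ≤ z₀ := by
          rw [abs_mul, abs_of_nonneg hu0]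
          calc u * |y| ≤ z₀ * 1 := mul_le_mul hu habs (abs_nonneg y) (le_trans hu0 hu)
            _ = z₀ := mul_one _
        linarith [neg_abs_le (u * y), abs_le.1 this]
      have hS' : S ≤ 2 * Real.exp z₀ := by
        have := hE w hw0 hw; have := hE z hz0 hz; rw [hS]; linarith
      have hmin : min (y ^ 2) 1 = y ^ 2 := min_eq_left (by nlinarith)
      have hind1 : (Set.Iic (-1 : ℝ)).indicator (fun y => y ^ 2 * Real.exp (z₀ * |y|)) y = 0 :=
        Set.indicator_of_notMem (by simp only [mem_Iic, not_le]; linarith) _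
      have hind2 : (Set.Ici (1 : ℝ)).indicator (fun y : ℝ => y ^ 2) y = 0 :=
        Set.indicator_of_notMem (by simp only [mem_Ici, not_le]; linarith) _
      rw [Hd, hind1, hind2, hmin]
      nlinarith [mul_le_mul_of_nonneg_left hS' (sq_nonneg y)]

lemma Hd_integrable (ν : Measure ℝ) (z₀ : ℝ)
    (hν : ∫⁻ y, ENNReal.ofReal (min (y ^ 2) 1) ∂ν < ⊤)
    (hR1 : IntegrableOn (fun y => y ^ 2 * Real.exp (z₀ * |y|)) (Set.Iic (-1)) ν)
    (hR2 : IntegrableOn (fun y => y ^ 2) (Set.Ici 1) ν) :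
    Integrable (Hd z₀) ν := by
  apply Integrable.const_mul
  exact (((integrable_indicator_iff measurableSet_Iic).2 hR1).add
    ((integrable_indicator_iff measurableSet_Ici).2 hR2)).add
    ((min_sq_integrable ν hν).const_mul _)

lemma jp_forward (ν : Measure ℝ) (a q z₀ : ℝ) (hq : 0 ≤ q) (hz₀ : 0 < z₀)
    (hν : ∫⁻ y, ENNReal.ofReal (min (y ^ 2) 1) ∂ν < ⊤)
    (h1 : IntegrableOn (fun y => |y| * Real.exp (z₀ * |y|)) (Set.Iic (-1)) ν)
    (h2 : IntegrableOn (fun y => |y|) (Set.Ici 1) ν)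
    (hR1 : IntegrableOn (fun y => y ^ 2 * Real.exp (z₀ * |y|)) (Set.Iic (-1)) ν)
    (hR2 : IntegrableOn (fun y => y ^ 2) (Set.Ici 1) ν) :
    ∃ K : NNReal, LipschitzOnWith K (Jprime ν a q) (Set.Icc 0 z₀) := by
  have hHd := Hd_integrable ν z₀ hν hR1 hR2
  set M : ℝ := ∫ y, Hd z₀ y ∂ν with hM
  refine ⟨(q + M).toNNReal, lipschitzOnWith_iff_dist_le_mul.2 fun z hz w hw => ?_⟩
  obtain ⟨hz0, hzt⟩ := hz
  obtain ⟨hw0, hwt⟩ := hw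
  have hiz := fz_integrable ν z₀ hν h1 h2 z hz0 hzt
  have hiw := fz_integrable ν z₀ hν h1 h2 w hw0 hwt
  have hsub : ∫ y, fz z y ∂ν - ∫ y, fz w y ∂ν = ∫ y, (fz z y - fz w y) ∂ν :=
    (integral_sub hiz hiw).symm
  have hbd : |∫ y, (fz z y - fz w y) ∂ν| ≤ |z - w| * M := by
    calc |∫ y, (fz z y - fz w y) ∂ν| ≤ ∫ y, |fz z y - fz w y| ∂ν :=
          by simpa [Real.norm_eq_abs] using
            norm_integral_le_integral_norm (fun y => fz z y - fz w y) (μ := ν)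
      _ ≤ ∫ y, |z - w| * Hd z₀ y ∂ν := by
          refine integral_mono (hiz.sub hiw).abs (hHd.const_mul _) fun y => ?_
          exact fz_diff_bound z₀ z w y hz0 hzt hw0 hwt
      _ = |z - w| * M := integral_const_mul _ _
  rw [Real.dist_eq, Real.dist_eq, Jprime_eq, Jprime_eq]
  have heq : -a + q * z + ∫ y, fz z y ∂ν - (-a + q * w + ∫ y, fz w y ∂ν)
      = q * (z - w) + ∫ y, (fz z y - fz w y) ∂ν := by
    rw [← hsub]; ring
  rw [heq]
  have hq' : |q * (z - w)| = q * |z - w| := by rw [abs_mul, abs_of_nonneg hq]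
  calc |q * (z - w) + ∫ y, (fz z y - fz w y) ∂ν|
      ≤ |q * (z - w)| + |∫ y, (fz z y - fz w y) ∂ν| := abs_add_le _ _
    _ ≤ q * |z - w| + |z - w| * M := by rw [hq']; linarith
    _ = (q + M) * |z - w| := by ring
    _ ≤ ((q + M).toNNReal : ℝ) * |z - w| :=
        mul_le_mul_of_nonneg_right (Real.le_coe_toNNReal _) (abs_nonneg _)

lemma seq_tendsto (z₀ : ℝ) : Tendsto (fun n : ℕ => z₀ / (n + 1)) atTop (𝓝 0) := by
  have h := (tendsto_const_div_atTop_nhds_zero_nat z₀).comp (tendsto_add_atTop_nat 1)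
  refine h.congr fun n => ?_
  simp only [Function.comp_apply]
  norm_num

lemma jp_reverse (ν : Measure ℝ) (a q z₀ : ℝ) (hq : 0 ≤ q) (hz₀ : 0 < z₀)
    (hν : ∫⁻ y, ENNReal.ofReal (min (y ^ 2) 1) ∂ν < ⊤)
    (h1 : IntegrableOn (fun y => |y| * Real.exp (z₀ * |y|)) (Set.Iic (-1)) ν)
    (h2 : IntegrableOn (fun y => |y|) (Set.Ici 1) ν)
    (K : NNReal) (hK : LipschitzOnWith K (Jprime ν a q) (Set.Icc 0 z₀)) :
    IntegrableOn (fun y => y ^ 2 * Real.exp (z₀ * |y|)) (Set.Iic (-1)) ν ∧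
      IntegrableOn (fun y => y ^ 2) (Set.Ici 1) ν := by
  set C : ℝ := (K : ℝ) + q with hC
  have hJint : ∀ z, 0 ≤ z → z ≤ z₀ → Integrable (fz z) ν :=
    fun z => fz_integrable ν z₀ hν h1 h2 z
  have hb : ∀ z w, 0 ≤ w → w ≤ z → z ≤ z₀ → ∫ y, (fz z y - fz w y) ∂ν ≤ C * (z - w) := by
    intro z w hw0 hwz hz
    have hz0 : 0 ≤ z := le_trans hw0 hwz
    have hd := hK.dist_le_mul z ⟨hz0, hz⟩ w ⟨hw0, le_trans hwz hz⟩
    rw [Real.dist_eq, Real.dist_eq] at hd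
    have heq : ∫ y, (fz z y - fz w y) ∂ν
        = (Jprime ν a q z - Jprime ν a q w) - q * (z - w) := by
      rw [integral_sub (hJint z hz0 hz) (hJint w hw0 (le_trans hwz hz)), Jprime_eq, Jprime_eq]
      ring
    have habs : |z - w| = z - w := abs_of_nonneg (by linarith)
    rw [habs] at hd
    have hup := (abs_le.1 hd).2
    rw [heq]
    nlinarith [mul_nonneg hq (by linarith : (0:ℝ) ≤ z - w)]
  -- sequences
  set u : ℕ → ℝ := fun n => z₀ / (n + 1) with hu
  have hu0 : ∀ n, 0 < u n := fun n => div_pos hz₀ (by positivity)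
  have huz : ∀ n, u n ≤ z₀ := fun n => by
    rw [hu]
    exact div_le_self hz₀.le (by push_cast; linarith [Nat.cast_nonneg (α := ℝ) n])
  have hut : Tendsto u atTop (𝓝 0) := seq_tendsto z₀
  constructor
  · -- Iic (-1) : use w n = z₀ - u n → z₀
    set w : ℕ → ℝ := fun n => z₀ - u n with hw
    have hw0 : ∀ n, 0 ≤ w n := fun n => by rw [hw]; simp only; linarith [huz n]
    have hwlt : ∀ n, w n < z₀ := fun n => by rw [hw]; simp only; linarith [hu0 n]
    have hwt : Tendsto w atTop (𝓝 z₀) := by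
      have := (tendsto_const_nhds (x := z₀) (f := atTop (α := ℕ))).sub hut
      simpa using this
    set ψ : ℕ → ℝ → ℝ := fun n y => (fz z₀ y - fz (w n) y) * (z₀ - w n)⁻¹ with hψ
    have hmeas : ∀ n, Measurable (ψ n) :=
      fun n => ((fz_meas z₀).sub (fz_meas (w n))).mul_const _
    have hnn : ∀ n y, 0 ≤ ψ n y := by
      intro n y
      apply mul_nonneg _ (inv_nonneg.2 (by linarith [hwlt n]))
      rw [fz_diff_eq]
      exact exp_diff_nonneg (w n) z₀ y (hwlt n).le
    have hint : ∀ n, Integrable (ψ n) ν := fun n =>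
      ((hJint z₀ hz₀.le le_rfl).sub (hJint (w n) (hw0 n) (hwlt n).le)).mul_const _
    have hI : ∀ n, ∫ y, ψ n y ∂ν ≤ C := by
      intro n
      rw [hψ]
      simp only
      rw [integral_mul_const]
      have hpos : (0:ℝ) < z₀ - w n := by linarith [hwlt n]
      calc (∫ y, (fz z₀ y - fz (w n) y) ∂ν) * (z₀ - w n)⁻¹
          ≤ (C * (z₀ - w n)) * (z₀ - w n)⁻¹ :=
            mul_le_mul_of_nonneg_right (hb z₀ (w n) (hw0 n) (hwlt n).le le_rfl)
              (inv_nonneg.2 hpos.le)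
        _ = C := by field_simp
    have hlim : ∀ y, Tendsto (fun n => ψ n y) atTop (𝓝 (y * (y * Real.exp (-(z₀ * y))))) := by
      intro y
      have hne : ∀ n, w n ≠ z₀ := fun n => (hwlt n).ne
      have hs := tendsto_slope_exp y z₀ hwt hne
      have h3 : Tendsto (fun n => y * -((Real.exp (-(w n * y)) - Real.exp (-(z₀ * y))) / (w n - z₀)))
          atTop (𝓝 (y * -(-y * Real.exp (-(z₀ * y))))) := (hs.neg).const_mul y
      have h4 : y * -(-y * Real.exp (-(z₀ * y))) = y * (y * Real.exp (-(z₀ * y))) := by ring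
      rw [h4] at h3
      refine h3.congr fun n => ?_
      show _ = (fz z₀ y - fz (w n) y) * (z₀ - w n)⁻¹
      rw [fz_diff_eq]
      have hne0 : w n - z₀ ≠ 0 := sub_ne_zero.2 (hwlt n).ne
      have hne1 : z₀ - w n ≠ 0 := sub_ne_zero.2 (hwlt n).ne'
      field_simp
      ring
    have hL := fatou_aux ν C ψ (fun y => y * (y * Real.exp (-(z₀ * y)))) hmeas hnn hint hI hlim
      (by fun_prop)
    refine (hL.integrableOn).congr_fun (fun y hy => ?_) measurableSet_Iic
    simp only [mem_Iic] at hy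
    rw [abs_of_nonpos (by linarith : y ≤ 0)]
    rw [show z₀ * -y = -(z₀ * y) by ring]
    ring
  · -- Ici 1 : use u n → 0
    set ψ : ℕ → ℝ → ℝ := fun n y => (fz (u n) y - fz 0 y) * (u n)⁻¹ with hψ
    have hmeas : ∀ n, Measurable (ψ n) :=
      fun n => ((fz_meas (u n)).sub (fz_meas 0)).mul_const _
    have hnn : ∀ n y, 0 ≤ ψ n y := by
      intro n y
      apply mul_nonneg _ (inv_nonneg.2 (hu0 n).le)
      rw [fz_diff_eq]
      exact exp_diff_nonneg 0 (u n) y (hu0 n).le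
    have hint : ∀ n, Integrable (ψ n) ν := fun n =>
      ((hJint (u n) (hu0 n).le (huz n)).sub (hJint 0 le_rfl hz₀.le)).mul_const _
    have hI : ∀ n, ∫ y, ψ n y ∂ν ≤ C := by
      intro n
      rw [hψ]
      simp only
      rw [integral_mul_const]
      have hb' := hb (u n) 0 le_rfl (hu0 n).le (huz n)
      rw [sub_zero] at hb'
      calc (∫ y, (fz (u n) y - fz 0 y) ∂ν) * (u n)⁻¹
          ≤ (C * u n) * (u n)⁻¹ :=
            mul_le_mul_of_nonneg_right hb' (inv_nonneg.2 (hu0 n).le)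
        _ = C := by field_simp [(hu0 n).ne']
    have hlim : ∀ y, Tendsto (fun n => ψ n y) atTop (𝓝 (y * y)) := by
      intro y
      have hne : ∀ n, u n ≠ (0:ℝ) := fun n => (hu0 n).ne'
      have hs := tendsto_slope_exp y 0 hut hne
      have h3 : Tendsto (fun n => y * -((Real.exp (-(u n * y)) - Real.exp (-(0 * y))) / (u n - 0)))
          atTop (𝓝 (y * -(-y * Real.exp (-(0 * y))))) := (hs.neg).const_mul y
      have h4 : y * -(-y * Real.exp (-(0 * y))) = y * y := by
        norm_num
      rw [h4] at h3
      refine h3.congr fun n => ?_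
      show _ = (fz (u n) y - fz 0 y) * (u n)⁻¹
      rw [fz_diff_eq]
      have hne0 : u n ≠ 0 := (hu0 n).ne'
      field_simp
      ring
    have hL := fatou_aux ν C ψ (fun y => y * y) hmeas hnn hint hI hlim (by fun_prop)
    have : Integrable (fun y : ℝ => y ^ 2) ν := by simpa [pow_two] using hL
    exact this.integrableOn

end JprimeAux2

/-- `J′` is Lipschitz on `[0, z₀]` iff
`∫_{(-∞,-1]} y² e^{z₀|y|} ν(dy) < ∞` and `∫_{[1,∞)} y² ν(dy) < ∞`. -/
theorem jprime_lipschitzOn_iff (ν : Measure ℝ) (a q z₀ : ℝ) (hq : 0 ≤ q) (hz₀ : 0 < z₀)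
    (hν : ∫⁻ y, ENNReal.ofReal (min (y ^ 2) 1) ∂ν < ⊤)
    (h1 : IntegrableOn (fun y => |y| * Real.exp (z₀ * |y|)) (Set.Iic (-1)) ν)
    (h2 : IntegrableOn (fun y => |y|) (Set.Ici 1) ν) :
    (∃ K : NNReal, LipschitzOnWith K (Jprime ν a q) (Set.Icc 0 z₀)) ↔
      (IntegrableOn (fun y => y ^ 2 * Real.exp (z₀ * |y|)) (Set.Iic (-1)) ν ∧
        IntegrableOn (fun y => y ^ 2) (Set.Ici 1) ν) := by
  constructor
  · rintro ⟨K, hK⟩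
    exact jp_reverse ν a q z₀ hq hz₀ hν h1 h2 K hK
  · rintro ⟨hR1, hR2⟩
    exact jp_forward ν a q z₀ hq hz₀ hν h1 h2 hR1 hR2
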